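/- Let V be a real vector space, α a nonzero alternating 1-form and β an alternating 2-form on V. If κ := ker α and the restriction of β to κ has kernel h := {v ∈ κ : β(v,w) = 0 for all w ∈ κ}, then h has even codimension in κ; in particular, if α ∧ β^k ≠ 0 and α ∧ β^{k+1} = 0, the restriction of β to κ has rank exactly 2k, so h has codimension 2k in κ. -/

import Mathlib

open Module

set_option synthInstance.maxHeartbeats 1000000
set_option maxHeartbeats 2000000
set_option linter.unusedSectionVars false
set_option linter.unusedTactic false
set_option linter.unreachableTactic false
set_option linter.unnecessarySeqFocus false

noncomputable section

variable {V : Type*} [AddCommGroup V] [Module ℝ V]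

/-- Wedge product of real-valued alternating forms. -/
def wedgeA {a b : ℕ} (f : V [⋀^Fin a]→ₗ[ℝ] ℝ) (g : V [⋀^Fin b]→ₗ[ℝ] ℝ) :
    V [⋀^Fin (a + b)]→ₗ[ℝ] ℝ :=
  ((TensorProduct.lid ℝ ℝ).toLinearMap.compAlternatingMap (f.domCoprod g)).domDomCongr
    finSumFinEquiv

/-- Wedge powers `β^k` of an alternating 2-form `β`. -/
def bpowA (β : V [⋀^Fin 2]→ₗ[ℝ] ℝ) : (k : ℕ) → V [⋀^Fin (2 * k)]→ₗ[ℝ] ℝ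
  | 0 => AlternatingMap.constOfIsEmpty ℝ V (Fin 0) 1
  | k + 1 => (wedgeA β (bpowA β k)).domDomCongr (finCongr (by omega))

lemma vec_one (y : Fin 1 → V) : y = ![y 0] := by
  funext i; fin_cases i <;> rfl

lemma vec_two (y : Fin 2 → V) : y = ![y 0, y 1] := by
  funext i; fin_cases i <;> rfl

lemma wedgeA_apply {a b : ℕ} (f : V [⋀^Fin a]→ₗ[ℝ] ℝ) (g : V [⋀^Fin b]→ₗ[ℝ] ℝ)
    (y : Fin (a + b) → V) :
    wedgeA f g y = TensorProduct.lid ℝ ℝ ((f.domCoprod g) fun z => y (finSumFinEquiv z)) := rfl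

lemma lid_summand {a b : ℕ} (f : V [⋀^Fin a]→ₗ[ℝ] ℝ) (g : V [⋀^Fin b]→ₗ[ℝ] ℝ)
    (σ : Equiv.Perm (Fin a ⊕ Fin b)) (x : Fin a ⊕ Fin b → V) :
    TensorProduct.lid ℝ ℝ (AlternatingMap.domCoprod.summand f g (Quotient.mk'' σ) x) =
      ((Equiv.Perm.sign σ : ℤ) : ℝ) *
        ((f fun i => x (σ (Sum.inl i))) * g fun i => x (σ (Sum.inr i))) := by
  rw [AlternatingMap.domCoprod.summand_mk'']
  simp only [MultilinearMap.smul_apply, MultilinearMap.domDomCongr_apply,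
    MultilinearMap.domCoprod_apply, AlternatingMap.coe_multilinearMap, Function.comp]
  rw [Units.smul_def, map_zsmul, TensorProduct.lid_tmul, smul_eq_mul, zsmul_eq_mul]

lemma lid_domCoprod {a b : ℕ} (f : V [⋀^Fin a]→ₗ[ℝ] ℝ) (g : V [⋀^Fin b]→ₗ[ℝ] ℝ)
    (x : Fin a ⊕ Fin b → V) :
    TensorProduct.lid ℝ ℝ ((f.domCoprod g) x) =
      ∑ c : Equiv.Perm.ModSumCongr (Fin a) (Fin b),
        TensorProduct.lid ℝ ℝ (AlternatingMap.domCoprod.summand f g c x) := by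
  rw [AlternatingMap.domCoprod_apply, MultilinearMap.sum_apply, map_sum]

lemma perm_mem_sumCongrHom_range {ιa ιb : Type*} [Fintype ιa] [Fintype ιb]
    [DecidableEq ιa] [DecidableEq ιb] (π : Equiv.Perm (ιa ⊕ ιb))
    (hπ : ∀ a, ∃ a', π (Sum.inl a) = Sum.inl a') :
    π ∈ (Equiv.Perm.sumCongrHom ιa ιb).range := by
  classical
  have hfl_spec : ∀ a, π (Sum.inl a) = Sum.inl ((hπ a).choose) := fun a => (hπ a).choose_spec
  set fl : ιa → ιa := fun a => (hπ a).choose with hfl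
  have hfl_inj : Function.Injective fl := by
    intro a a' h
    have h2 : π (Sum.inl a) = π (Sum.inl a') := by
      rw [hfl_spec a, hfl_spec a']
      exact congrArg Sum.inl h
    exact Sum.inl_injective (π.injective h2)
  have hfl_surj : Function.Surjective fl := Finite.surjective_of_injective hfl_inj
  have hr : ∀ b : ιb, ∃ b', π (Sum.inr b) = Sum.inr b' := by
    intro b
    rcases hs : π (Sum.inr b) with a' | b'
    · obtain ⟨a, ha⟩ := hfl_surj a'
      have : π (Sum.inl a) = π (Sum.inr b) := by
        rw [hfl_spec a, hs]
        exact congrArg _ ha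
      exact absurd (π.injective this) (by simp)
    · exact ⟨b', rfl⟩
  have hfr_spec : ∀ b, π (Sum.inr b) = Sum.inr ((hr b).choose) := fun b => (hr b).choose_spec
  set fr : ιb → ιb := fun b => (hr b).choose with hfr
  have hfr_inj : Function.Injective fr := by
    intro b b' h
    have h2 : π (Sum.inr b) = π (Sum.inr b') := by
      rw [hfr_spec b, hfr_spec b']
      exact congrArg Sum.inr h
    exact Sum.inr_injective (π.injective h2)
  refine ⟨(Equiv.ofBijective fl (Finite.injective_iff_bijective.mp hfl_inj),
    Equiv.ofBijective fr (Finite.injective_iff_bijective.mp hfr_inj)), ?_⟩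
  rw [Equiv.Perm.sumCongrHom_apply]
  ext z
  rcases z with a | b
  · simp only [Equiv.sumCongr_apply, Sum.map_inl, Equiv.ofBijective_apply]
    exact (hfl_spec a).symm
  · simp only [Equiv.sumCongr_apply, Sum.map_inr, Equiv.ofBijective_apply]
    exact (hfr_spec b).symm

lemma mk_eq_mk_of {ιa ιb : Type*} [Fintype ιa] [Fintype ιb] [DecidableEq ιa] [DecidableEq ιb]
    (σ τ : Equiv.Perm (ιa ⊕ ιb)) (h : σ⁻¹ * τ ∈ (Equiv.Perm.sumCongrHom ιa ιb).range) :
    (Quotient.mk'' σ : Equiv.Perm.ModSumCongr ιa ιb) = Quotient.mk'' τ :=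
  Quotient.sound' (QuotientGroup.leftRel_apply.mpr h)

lemma lid_domCoprod_one_left {b : ℕ} (f : V [⋀^Fin 1]→ₗ[ℝ] ℝ) (g : V [⋀^Fin b]→ₗ[ℝ] ℝ)
    (x : Fin 1 ⊕ Fin b → V) (hx : ∀ i : Fin b, f (fun _ => x (Sum.inr i)) = 0) :
    TensorProduct.lid ℝ ℝ ((f.domCoprod g) x)
      = f (fun _ => x (Sum.inl 0)) * g (fun i => x (Sum.inr i)) := by
  have hvan : ∀ c : Equiv.Perm.ModSumCongr (Fin 1) (Fin b),
      c ≠ Quotient.mk'' (1 : Equiv.Perm (Fin 1 ⊕ Fin b)) →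
      TensorProduct.lid ℝ ℝ (AlternatingMap.domCoprod.summand f g c x) = 0 := by
    intro c hc
    induction c using Quotient.inductionOn' with
    | h σ =>
      rcases hs : σ (Sum.inl 0) with a | i
      · exfalso
        apply hc
        refine mk_eq_mk_of σ 1 ?_
        rw [mul_one]
        refine (Subgroup.inv_mem_iff _).mpr (perm_mem_sumCongrHom_range σ ?_)
        intro a'
        exact ⟨a, by rw [Subsingleton.elim a' (0 : Fin 1)]; exact hs⟩
      · rw [lid_summand]
        have h1 : (fun j : Fin 1 => x (σ (Sum.inl j))) = fun _ => x (Sum.inr i) := by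
          funext j; rw [Subsingleton.elim j (0 : Fin 1), hs]
        rw [h1, hx i, zero_mul, mul_zero]
  rw [lid_domCoprod, Fintype.sum_eq_single _ hvan, lid_summand]
  have h1 : (fun i : Fin 1 => x ((1 : Equiv.Perm (Fin 1 ⊕ Fin b)) (Sum.inl i)))
      = fun _ => x (Sum.inl 0) := by
    funext j; rw [Subsingleton.elim j (0 : Fin 1)]; rfl
  have h2 : (fun i : Fin b => x ((1 : Equiv.Perm (Fin 1 ⊕ Fin b)) (Sum.inr i)))
      = fun i => x (Sum.inr i) := rfl
  rw [h1, h2]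
  simp

lemma skewB (B : LinearMap.BilinForm ℝ V) (halt : ∀ v, B v v = 0) :
    ∀ v w, B w v = - B v w := by
  intro v w
  have h := halt (v + w)
  simp only [map_add, LinearMap.add_apply] at h
  rw [halt v, halt w] at h
  linarith

def radB (B : LinearMap.BilinForm ℝ V) (κ : Submodule ℝ V) : Submodule ℝ V :=
  κ ⊓ ⨅ w ∈ κ, LinearMap.ker (B.flip w)

lemma mem_radB {B : LinearMap.BilinForm ℝ V} {κ : Submodule ℝ V} {v : V} :
    v ∈ radB B κ ↔ v ∈ κ ∧ ∀ w ∈ κ, B v w = 0 := by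
  simp [radB, Submodule.mem_inf, Submodule.mem_iInf, LinearMap.mem_ker]

structure MatchedB (B : LinearMap.BilinForm ℝ V) {m : ℕ} (p : Fin m → V × V) : Prop where
  one : ∀ i, B (p i).1 (p i).2 = 1
  z11 : ∀ i j, i ≠ j → B (p i).1 (p j).1 = 0
  z12 : ∀ i j, i ≠ j → B (p i).1 (p j).2 = 0
  z21 : ∀ i j, i ≠ j → B (p i).2 (p j).1 = 0
  z22 : ∀ i j, i ≠ j → B (p i).2 (p j).2 = 0

lemma exists_matched [FiniteDimensional ℝ V] (B : LinearMap.BilinForm ℝ V)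
    (halt : ∀ v, B v v = 0) (κ : Submodule ℝ V) :
    ∃ (m : ℕ) (p : Fin m → V × V), (∀ i, (p i).1 ∈ κ) ∧ (∀ i, (p i).2 ∈ κ) ∧ MatchedB B p ∧
      finrank ℝ κ = finrank ℝ (radB B κ) + 2 * m := by
  have hskew := skewB B halt
  suffices H : ∀ (n : ℕ) (κ : Submodule ℝ V), finrank ℝ κ = n →
      ∃ (m : ℕ) (p : Fin m → V × V), (∀ i, (p i).1 ∈ κ) ∧ (∀ i, (p i).2 ∈ κ) ∧ MatchedB B p ∧
      finrank ℝ κ = finrank ℝ (radB B κ) + 2 * m by exact H _ κ rfl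
  intro n
  induction n using Nat.strong_induction_on with
  | _ n ih =>
    intro κ hn
    by_cases hr : κ ≤ radB B κ
    · refine ⟨0, fun i => i.elim0, fun i => i.elim0, fun i => i.elim0, ?_, ?_⟩
      · exact ⟨fun i => i.elim0, fun i => i.elim0, fun i => i.elim0, fun i => i.elim0,
          fun i => i.elim0⟩
      · have : radB B κ = κ := le_antisymm inf_le_left hr
        rw [this]; ring
    · obtain ⟨u, hu, hunot⟩ := SetLike.not_le_iff_exists.mp hr
      have : ∃ w ∈ κ, B u w ≠ 0 := by
        by_contra hc
        push_neg at hc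
        exact hunot (mem_radB.mpr ⟨hu, hc⟩)
      obtain ⟨w0, hw0, hBw0⟩ := this
      set w : V := (B u w0)⁻¹ • w0 with hw
      have hwκ : w ∈ κ := κ.smul_mem _ hw0
      have huw : B u w = 1 := by
        rw [hw, map_smul, smul_eq_mul, inv_mul_cancel₀ hBw0]
      have hwu : B w u = -1 := by rw [hskew, huw]
      -- the symplectic complement of (u, w) inside κ
      set κ' : Submodule ℝ V := κ ⊓ LinearMap.ker (B.flip u) ⊓ LinearMap.ker (B.flip w) with hκ'
      have hκ'le : κ' ≤ κ := le_trans inf_le_left inf_le_left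
      have mem_κ' : ∀ v : V, v ∈ κ' ↔ v ∈ κ ∧ B v u = 0 ∧ B v w = 0 := by
        intro v
        simp [hκ', Submodule.mem_inf, LinearMap.mem_ker, and_assoc]
      -- dimension drop by 2
      have hdim2 : finrank ℝ κ = finrank ℝ κ' + 2 := by
        set T : V →ₗ[ℝ] ℝ × ℝ := LinearMap.prod (B.flip u) (B.flip w) with hT
        have hker : LinearMap.ker (T.domRestrict κ) = Submodule.comap κ.subtype κ' := by
          ext ⟨v, hv⟩
          simp only [LinearMap.mem_ker, LinearMap.domRestrict_apply, Submodule.mem_comap,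
            Submodule.coe_subtype, mem_κ' v, hT, LinearMap.prod_apply, LinearMap.BilinForm.flip_apply,
            Prod.mk_eq_zero, Function.prod]
          tauto
        have hsurj : Function.Surjective (T.domRestrict κ) := by
          rintro ⟨a, b⟩
          refine ⟨⟨b • u + (-a) • w, κ.add_mem (κ.smul_mem _ hu) (κ.smul_mem _ hwκ)⟩, ?_⟩
          have : T (b • u + (-a) • w) = (a, b) := by
            simp only [hT, map_add, map_smul, LinearMap.prod_apply, Function.prod,
              LinearMap.BilinForm.flip_apply, Prod.smul_mk, Prod.mk_add_mk]
            rw [halt u, halt w, huw, hwu]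
            norm_num
          rw [LinearMap.domRestrict_apply]
          exact this
        have hrn := LinearMap.finrank_range_add_finrank_ker (T.domRestrict κ)
        rw [LinearMap.range_eq_top.mpr hsurj] at hrn
        have h2 : finrank ℝ (⊤ : Submodule ℝ (ℝ × ℝ)) = 2 := by
          simp [finrank_top]
        have hker2 : finrank ℝ (LinearMap.ker (T.domRestrict κ)) = finrank ℝ κ' := by
          rw [hker]
          exact LinearEquiv.finrank_eq (Submodule.comapSubtypeEquivOfLe hκ'le)
        rw [h2, hker2] at hrn
        omega
      -- radicals agree
      have hrad : radB B κ' = radB B κ := by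
        ext v
        simp only [mem_radB]
        constructor
        · rintro ⟨hv, hvz⟩
          rw [mem_κ' v] at hv
          refine ⟨hv.1, fun y hy => ?_⟩
          set y' : V := y + (B y u) • w - (B y w) • u with hy'
          have hyκ' : y' ∈ κ' := by
            rw [mem_κ']
            have hmem : y' ∈ κ := Submodule.sub_mem _
              (Submodule.add_mem _ hy (κ.smul_mem _ hwκ)) (κ.smul_mem _ hu)
            refine ⟨hmem, ?_, ?_⟩
            · simp only [hy', map_sub, map_add, map_smul, LinearMap.sub_apply,
                LinearMap.add_apply, LinearMap.smul_apply, smul_eq_mul]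
              rw [hwu, halt u]; ring
            · simp only [hy', map_sub, map_add, map_smul, LinearMap.sub_apply,
                LinearMap.add_apply, LinearMap.smul_apply, smul_eq_mul]
              rw [halt w, huw]; ring
          have hvy' := hvz y' hyκ'
          have h1 : B v u = 0 := hv.2.1
          have h2 : B v w = 0 := hv.2.2
          have : B v y' = B v y + (B y u) * B v w - (B y w) * B v u := by
            simp only [hy', map_sub, map_add, map_smul, smul_eq_mul]
          rw [this, h1, h2] at hvy'
          rw [mul_zero, mul_zero, add_zero, sub_zero] at hvy'
          exact hvy'
        · rintro ⟨hv, hvz⟩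
          refine ⟨?_, fun y hy => hvz y (hκ'le hy)⟩
          rw [mem_κ']
          exact ⟨hv, hvz u hu, hvz w hwκ⟩
      -- apply the induction hypothesis
      have hlt : finrank ℝ κ' < n := by
        rw [← hn, hdim2]
        exact Nat.lt_add_of_pos_right (by norm_num)
      obtain ⟨m', p', hp1, hp2, hpm, hdim'⟩ := ih (finrank ℝ κ') hlt κ' rfl
      refine ⟨m' + 1, Fin.cons (u, w) p', ?_, ?_, ?_, ?_⟩
      · intro i
        refine Fin.cases ?_ ?_ i
        · exact hu
        · intro j; exact hκ'le (hp1 j)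
      · intro i
        refine Fin.cases ?_ ?_ i
        · exact hwκ
        · intro j; exact hκ'le (hp2 j)
      · have hp1u : ∀ j, B (p' j).1 u = 0 := fun j => ((mem_κ' _).mp (hp1 j)).2.1
        have hp1w : ∀ j, B (p' j).1 w = 0 := fun j => ((mem_κ' _).mp (hp1 j)).2.2
        have hp2u : ∀ j, B (p' j).2 u = 0 := fun j => ((mem_κ' _).mp (hp2 j)).2.1
        have hp2w : ∀ j, B (p' j).2 w = 0 := fun j => ((mem_κ' _).mp (hp2 j)).2.2
        refine ⟨?_, ?_, ?_, ?_, ?_⟩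
        · intro i
          rcases Fin.eq_zero_or_eq_succ i with rfl | ⟨i', rfl⟩
          · simpa using huw
          · simpa using hpm.one i'
        all_goals (
          intro i j hij
          rcases Fin.eq_zero_or_eq_succ i with rfl | ⟨i', rfl⟩ <;>
            rcases Fin.eq_zero_or_eq_succ j with rfl | ⟨j', rfl⟩ <;>
            simp only [Fin.cons_zero, Fin.cons_succ]
          · exact absurd rfl hij
          · first
            | simp [hp1u, hp1w, hp2u, hp2w]
            | (rw [hskew]; simp [hp1u, hp1w, hp2u, hp2w])
          · first
            | simp [hp1u, hp1w, hp2u, hp2w]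
            | (rw [hskew]; simp [hp1u, hp1w, hp2u, hp2w])
          · have hij' : i' ≠ j' := fun hcc => hij (congrArg Fin.succ hcc)
            first
            | exact hpm.z11 _ _ hij'
            | exact hpm.z12 _ _ hij'
            | exact hpm.z21 _ _ hij'
            | exact hpm.z22 _ _ hij')
      · rw [hdim2, hdim', hrad]; ring
def FL {m : ℕ} (p : Fin m → V × V) : Fin (2 * m) → V := fun j =>
  if (j : ℕ) % 2 = 0 then (p ⟨(j : ℕ) / 2, by omega⟩).1 else (p ⟨(j : ℕ) / 2, by omega⟩).2

lemma FL_fst {m : ℕ} (p : Fin m → V × V) (j : Fin (2 * m)) (i : Fin m)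
    (hj : (j : ℕ) = 2 * (i : ℕ)) : FL p j = (p i).1 := by
  have hlt := j.isLt
  have hdiv : (j : ℕ) / 2 = (i : ℕ) := by omega
  simp only [FL]
  rw [if_pos (by omega : (j : ℕ) % 2 = 0)]
  rw [show (⟨(j : ℕ) / 2, by omega⟩ : Fin m) = i from Fin.ext hdiv]

lemma FL_snd {m : ℕ} (p : Fin m → V × V) (j : Fin (2 * m)) (i : Fin m)
    (hj : (j : ℕ) = 2 * (i : ℕ) + 1) : FL p j = (p i).2 := by
  have hlt := j.isLt
  have hdiv : (j : ℕ) / 2 = (i : ℕ) := by omega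
  simp only [FL]
  rw [if_neg (by omega : ¬ (j : ℕ) % 2 = 0)]
  rw [show (⟨(j : ℕ) / 2, by omega⟩ : Fin m) = i from Fin.ext hdiv]

lemma mod2_lemma (a s M : ℕ) (hs : s < 2) (hM : 0 < M) :
    (2 * a + s) % (2 * M) = 2 * (a % M) + s := by
  have h2 : a % M < M := Nat.mod_lt _ hM
  have hs' : s % (2 * M) = s := Nat.mod_eq_of_lt (by omega)
  calc (2 * a + s) % (2 * M) = ((2 * a) % (2 * M) + s % (2 * M)) % (2 * M) := Nat.add_mod _ _ _
    _ = (2 * (a % M) + s) % (2 * M) := by rw [Nat.mul_mod_mul_left, hs']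
    _ = 2 * (a % M) + s := Nat.mod_eq_of_lt (by omega)

lemma finRotate_pow_val {M : ℕ} : ∀ (s : ℕ) (j : Fin (M + 1)),
    ((((finRotate (M + 1)) ^ s) j : Fin (M + 1)) : ℕ) = ((j : ℕ) + s) % (M + 1) := by
  intro s
  induction s with
  | zero =>
    intro j
    simp [Nat.mod_eq_of_lt j.isLt]
  | succ s ihs =>
    intro j
    have h1 : ((finRotate (M + 1) j : Fin (M + 1)) : ℕ) = ((j : ℕ) + 1) % (M + 1) := by
      rw [finRotate_succ_apply, Fin.val_add, Fin.val_one']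
      exact Nat.add_mod_mod _ _ _
    rw [pow_succ, Equiv.Perm.mul_apply, ihs (finRotate (M + 1) j), h1, Nat.mod_add_mod]
    congr 1
    omega

lemma sign_finRotate_pow_even (M t : ℕ) :
    Equiv.Perm.sign ((finRotate (M + 1)) ^ (2 * t)) = 1 := by
  rw [map_pow, sign_finRotate, ← pow_mul]
  exact Even.neg_one_pow ⟨M * t, by rw [Nat.add_sub_cancel]; ring⟩

lemma FL_B_pair' {m : ℕ} (B : LinearMap.BilinForm ℝ V) (halt : ∀ v, B v v = 0)
    {p : Fin m → V × V} (hp : MatchedB B p) (i j : Fin (2 * m))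
    (hne : B (FL p i) (FL p j) ≠ 0) :
    ∃ t : Fin m, ((i : ℕ) = 2 * (t : ℕ) ∧ (j : ℕ) = 2 * (t : ℕ) + 1) ∨
      ((i : ℕ) = 2 * (t : ℕ) + 1 ∧ (j : ℕ) = 2 * (t : ℕ)) := by
  have hi := i.isLt
  have hj := j.isLt
  have hdiv : (i : ℕ) / 2 = (j : ℕ) / 2 := by
    by_contra hd
    apply hne
    have hdi : (⟨(i : ℕ) / 2, by omega⟩ : Fin m) ≠ (⟨(j : ℕ) / 2, by omega⟩ : Fin m) := by
      intro hcc
      exact hd (congrArg Fin.val hcc)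
    simp only [FL]
    split_ifs with h1 h2 h2
    · exact hp.z11 _ _ hdi
    · exact hp.z12 _ _ hdi
    · exact hp.z21 _ _ hdi
    · exact hp.z22 _ _ hdi
  have hij : (i : ℕ) ≠ (j : ℕ) := by
    intro hcc
    exact hne (by rw [show i = j from Fin.ext hcc]; exact halt _)
  exact ⟨⟨(i : ℕ) / 2, by omega⟩, by simp only; omega⟩

lemma bpowA_FL (B : LinearMap.BilinForm ℝ V) (β : V [⋀^Fin 2]→ₗ[ℝ] ℝ)
    (hB : ∀ v w, B v w = β ![v, w]) (halt : ∀ v, B v v = 0) :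
    ∀ (n : ℕ) (p : Fin n → V × V), MatchedB B p → bpowA β n (FL p) = (n.factorial : ℝ) := by
  have hβ2 : ∀ y : Fin 2 → V, β y = B (y 0) (y 1) := by
    intro y
    calc β y = β ![y 0, y 1] := congrArg β (vec_two y)
      _ = B (y 0) (y 1) := (hB _ _).symm
  intro n
  induction n with
  | zero =>
    intro p hp
    simp [bpowA]
  | succ n ihn =>
    intro p hp
    classical
    set g : V [⋀^Fin (2 * n)]→ₗ[ℝ] ℝ := bpowA β n with hg
    have hc : 2 + 2 * n = 2 * (n + 1) := by omega
    have hc2 : 2 + 2 * n = 2 * n + 1 + 1 := by omega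
    set E : (Fin 2 ⊕ Fin (2 * n)) ≃ Fin (2 * n + 1 + 1) :=
      finSumFinEquiv.trans (finCongr hc2) with hE
    set x : Fin 2 ⊕ Fin (2 * n) → V := fun z => FL p ((finCongr hc) (finSumFinEquiv z)) with hx
    have hstep : bpowA β (n + 1) (FL p) = TensorProduct.lid ℝ ℝ ((β.domCoprod g) x) := by
      rw [show bpowA β (n + 1) = (wedgeA β (bpowA β n)).domDomCongr (finCongr hc) from rfl]
      rw [AlternatingMap.domDomCongr_apply, wedgeA_apply]
      rfl
    have hN : 0 < n + 1 := Nat.succ_pos n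
    set u : ℕ → V := fun a => if h : a < 2 * (n + 1) then FL p ⟨a, h⟩ else 0 with hu
    have hEl : ∀ i : Fin 2, ((E (Sum.inl i)) : ℕ) = (i : ℕ) := by
      intro i
      simp [hE, finCongr_apply]
    have hEr : ∀ j : Fin (2 * n), ((E (Sum.inr j)) : ℕ) = 2 + (j : ℕ) := by
      intro j
      simp [hE, finCongr_apply]
      omega
    have hxu : ∀ z, x z = u ((E z : Fin (2 * n + 1 + 1)) : ℕ) := by
      intro z
      have hlt : ((E z : Fin (2 * n + 1 + 1)) : ℕ) < 2 * (n + 1) := by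
        have := (E z).isLt; omega
      simp only [hx, hu]
      rw [dif_pos hlt]
      have hv : (((finCongr hc) (finSumFinEquiv z)) : ℕ) = ((E z : Fin (2 * n + 1 + 1)) : ℕ) := by
        simp [hE, finCongr_apply]
      rw [show ((finCongr hc) (finSumFinEquiv z)) = (⟨((E z : Fin (2 * n + 1 + 1)) : ℕ), hlt⟩ :
        Fin (2 * (n + 1))) from Fin.ext hv]
    set σp : Fin (n + 1) → Equiv.Perm (Fin 2 ⊕ Fin (2 * n)) :=
      fun t => Equiv.permCongr E.symm ((finRotate (2 * n + 1 + 1)) ^ (2 * (t : ℕ))) with hσp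
    have hsign : ∀ t, Equiv.Perm.sign (σp t) = 1 := by
      intro t
      simp only [hσp]
      rw [Equiv.Perm.sign_permCongr]
      exact sign_finRotate_pow_even _ _
    have hEσ : ∀ (t : Fin (n + 1)) (z : Fin 2 ⊕ Fin (2 * n)),
        ((E (σp t z)) : ℕ) = (((E z) : ℕ) + 2 * (t : ℕ)) % (2 * (n + 1)) := by
      intro t z
      simp only [hσp, Equiv.permCongr_apply, Equiv.symm_symm, Equiv.apply_symm_apply]
      rw [finRotate_pow_val]
      congr 1
    have hxσ : ∀ (t : Fin (n + 1)) z,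
        x (σp t z) = u ((((E z) : ℕ) + 2 * (t : ℕ)) % (2 * (n + 1))) := by
      intro t z
      rw [hxu, hEσ]
    -- value of the β-factor on a good representative
    have hβval : ∀ t : Fin (n + 1), (β fun i : Fin 2 => x (σp t (Sum.inl i))) = 1 := by
      intro t
      have htlt := t.isLt
      rw [hβ2]
      have h0 : x (σp t (Sum.inl 0)) = (p t).1 := by
        rw [hxσ, hEl]
        have hm : (((0 : Fin 2) : ℕ) + 2 * (t : ℕ)) % (2 * (n + 1)) = 2 * (t : ℕ) := by
          rw [show ((0 : Fin 2) : ℕ) = 0 from rfl, Nat.mod_eq_of_lt (by omega)]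
          omega
        rw [hm]
        simp only [hu]
        rw [dif_pos (by omega)]
        exact FL_fst p _ t rfl
      have h1 : x (σp t (Sum.inl 1)) = (p t).2 := by
        rw [hxσ, hEl]
        have hm : (((1 : Fin 2) : ℕ) + 2 * (t : ℕ)) % (2 * (n + 1)) = 2 * (t : ℕ) + 1 := by
          rw [show ((1 : Fin 2) : ℕ) = 1 from rfl, Nat.mod_eq_of_lt (by omega)]
          omega
        rw [hm]
        simp only [hu]
        rw [dif_pos (by omega)]
        exact FL_snd p _ t rfl
      show B (x (σp t (Sum.inl 0))) (x (σp t (Sum.inl 1))) = 1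
      rw [h0, h1]
      exact hp.one t
    -- value of the g-factor on a good representative
    have hgval : ∀ t : Fin (n + 1),
        (g fun j : Fin (2 * n) => x (σp t (Sum.inr j))) = (n.factorial : ℝ) := by
      intro t
      have htlt := t.isLt
      set q : Fin n → V × V :=
        fun r => p ⟨(1 + (t : ℕ) + (r : ℕ)) % (n + 1), Nat.mod_lt _ hN⟩ with hq
      have hqinj : ∀ r s : Fin n,
          (1 + (t : ℕ) + (r : ℕ)) % (n + 1) = (1 + (t : ℕ) + (s : ℕ)) % (n + 1) → r = s := by
        intro r s hrs
        have h2 : (r : ℕ) ≡ (s : ℕ) [MOD (n + 1)] :=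
          Nat.ModEq.add_left_cancel' (1 + (t : ℕ)) hrs
        have h3 : (r : ℕ) % (n + 1) = (s : ℕ) % (n + 1) := h2
        have hrl := r.isLt
        have hsl := s.isLt
        rw [Nat.mod_eq_of_lt (by omega), Nat.mod_eq_of_lt (by omega)] at h3
        exact Fin.ext h3
      have hqmatched : MatchedB B q := by
        refine ⟨fun i => hp.one _, ?_, ?_, ?_, ?_⟩ <;>
          · intro i j hij
            simp only [hq]
            first
            | exact hp.z11 _ _ (fun hcc => hij (hqinj i j (congrArg Fin.val hcc)))
            | exact hp.z12 _ _ (fun hcc => hij (hqinj i j (congrArg Fin.val hcc)))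
            | exact hp.z21 _ _ (fun hcc => hij (hqinj i j (congrArg Fin.val hcc)))
            | exact hp.z22 _ _ (fun hcc => hij (hqinj i j (congrArg Fin.val hcc)))
      have hFLq : (fun j : Fin (2 * n) => x (σp t (Sum.inr j))) = FL q := by
        funext j
        rw [hxσ, hEr]
        have hjlt := j.isLt
        have hdecomp : 2 + (j : ℕ) + 2 * (t : ℕ)
            = 2 * (1 + (t : ℕ) + (j : ℕ) / 2) + (j : ℕ) % 2 := by omega
        rw [hdecomp, mod2_lemma _ _ _ (by omega) hN]
        have hAlt : (1 + (t : ℕ) + (j : ℕ) / 2) % (n + 1) < n + 1 := Nat.mod_lt _ hN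
        simp only [hu]
        rw [dif_pos (by omega)]
        by_cases hpar : (j : ℕ) % 2 = 0
        · rw [FL_fst p _ (⟨(1 + (t : ℕ) + (j : ℕ) / 2) % (n + 1), hAlt⟩ : Fin (n + 1))
            (by simp only; omega)]
          rw [FL_fst q j (⟨(j : ℕ) / 2, by omega⟩ : Fin n) (by simp only; omega)]
        · rw [FL_snd p _ (⟨(1 + (t : ℕ) + (j : ℕ) / 2) % (n + 1), hAlt⟩ : Fin (n + 1))
            (by simp only; omega)]
          rw [FL_snd q j (⟨(j : ℕ) / 2, by omega⟩ : Fin n) (by simp only; omega)]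
      rw [hFLq]
      exact ihn q hqmatched
    set fm : Fin (n + 1) → Equiv.Perm.ModSumCongr (Fin 2) (Fin (2 * n)) :=
      fun t => Quotient.mk'' (σp t) with hfm
    have hgood : ∀ t, TensorProduct.lid ℝ ℝ (AlternatingMap.domCoprod.summand β g (fm t) x)
        = (n.factorial : ℝ) := by
      intro t
      simp only [hfm]
      rw [lid_summand, hsign t, hβval t, hgval t]
      norm_num
    have hfm_inj : Function.Injective fm := by
      intro s t hst
      simp only [hfm] at hst
      obtain ⟨⟨πl, πr⟩, hπ⟩ := QuotientGroup.leftRel_apply.mp (Quotient.eq''.mp hst)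
      have happ : σp t (Sum.inl 0) = σp s (Sum.inl (πl 0)) := by
        have h1 : σp s * ((σp s)⁻¹ * σp t) = σp t := by group
        conv_lhs => rw [← h1, ← hπ]
        rfl
      have hv := congrArg (fun y : Fin 2 ⊕ Fin (2 * n) => ((E y) : ℕ)) happ
      rw [hEσ t (Sum.inl 0), hEσ s (Sum.inl (πl 0)), hEl, hEl,
        show ((0 : Fin 2) : ℕ) = 0 from rfl] at hv
      have hsl := s.isLt
      have htl := t.isLt
      have hπl := (πl 0).isLt
      rw [Nat.mod_eq_of_lt (by omega), Nat.mod_eq_of_lt (by omega)] at hv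
      exact Fin.ext (by omega)
    have hEinj : ∀ y y' : Fin 2 ⊕ Fin (2 * n), ((E y) : ℕ) = ((E y') : ℕ) → y = y' :=
      fun y y' hvv => E.injective (Fin.ext hvv)
    have hvanish : ∀ c ∈ (Finset.univ : Finset (Equiv.Perm.ModSumCongr (Fin 2) (Fin (2 * n)))),
        c ∉ Finset.univ.image fm →
        TensorProduct.lid ℝ ℝ (AlternatingMap.domCoprod.summand β g c x) = 0 := by
      intro c _ hc
      induction c using Quotient.inductionOn' with
      | h σ =>
        rw [lid_summand]
        by_cases hβz : (β fun i : Fin 2 => x (σ (Sum.inl i))) = 0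
        · rw [hβz]; ring
        · exfalso
          apply hc
          have hBz : B (x (σ (Sum.inl 0))) (x (σ (Sum.inl 1))) ≠ 0 := by
            intro h0
            exact hβz ((hβ2 _).trans h0)
          have hlt0 : ((E (σ (Sum.inl 0))) : ℕ) < 2 * (n + 1) := by
            have := (E (σ (Sum.inl 0))).isLt; omega
          have hlt1 : ((E (σ (Sum.inl 1))) : ℕ) < 2 * (n + 1) := by
            have := (E (σ (Sum.inl 1))).isLt; omega
          set I0 : Fin (2 * (n + 1)) := ⟨((E (σ (Sum.inl 0))) : ℕ), hlt0⟩ with hI0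
          set I1 : Fin (2 * (n + 1)) := ⟨((E (σ (Sum.inl 1))) : ℕ), hlt1⟩ with hI1
          have hx0 : x (σ (Sum.inl 0)) = FL p I0 := by
            rw [hxu]
            simp only [hu]
            rw [dif_pos hlt0]
          have hx1 : x (σ (Sum.inl 1)) = FL p I1 := by
            rw [hxu]
            simp only [hu]
            rw [dif_pos hlt1]
          rw [hx0, hx1] at hBz
          obtain ⟨tt, hcase⟩ := FL_B_pair' B halt hp I0 I1 hBz
          refine Finset.mem_image.mpr ⟨tt, Finset.mem_univ _, ?_⟩
          have httl := tt.isLt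
          have hEσ0 : ((E (σp tt (Sum.inl 0))) : ℕ) = 2 * (tt : ℕ) := by
            rw [hEσ, hEl, show ((0 : Fin 2) : ℕ) = 0 from rfl,
              Nat.mod_eq_of_lt (show 0 + 2 * (tt : ℕ) < 2 * (n + 1) by omega)]
            omega
          have hEσ1 : ((E (σp tt (Sum.inl 1))) : ℕ) = 2 * (tt : ℕ) + 1 := by
            rw [hEσ, hEl, show ((1 : Fin 2) : ℕ) = 1 from rfl,
              Nat.mod_eq_of_lt (show 1 + 2 * (tt : ℕ) < 2 * (n + 1) by omega)]
            omega
          simp only [hfm]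
          apply mk_eq_mk_of
          apply perm_mem_sumCongrHom_range
          intro a
          have ha := a.isLt
          rcases hcase with ⟨h0, h1⟩ | ⟨h0, h1⟩
          · by_cases ha0 : a = 0
            · refine ⟨0, ?_⟩
              subst ha0
              rw [Equiv.Perm.mul_apply]
              rw [show σ (Sum.inl 0) = σp tt (Sum.inl 0) from
                hEinj _ _ (by rw [hEσ0]; exact h0)]
              exact Equiv.symm_apply_apply _ _
            · refine ⟨1, ?_⟩
              have ha1 : a = 1 := by omega
              subst ha1
              rw [Equiv.Perm.mul_apply]
              rw [show σ (Sum.inl 1) = σp tt (Sum.inl 1) from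
                hEinj _ _ (by rw [hEσ1]; exact h1)]
              exact Equiv.symm_apply_apply _ _
          · by_cases ha0 : a = 0
            · refine ⟨1, ?_⟩
              subst ha0
              rw [Equiv.Perm.mul_apply]
              rw [show σ (Sum.inl 0) = σp tt (Sum.inl 1) from
                hEinj _ _ (by rw [hEσ1]; exact h0)]
              exact Equiv.symm_apply_apply _ _
            · refine ⟨0, ?_⟩
              have ha1 : a = 1 := by omega
              subst ha1
              rw [Equiv.Perm.mul_apply]
              rw [show σ (Sum.inl 1) = σp tt (Sum.inl 0) from
                hEinj _ _ (by rw [hEσ0]; exact h1)]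
              exact Equiv.symm_apply_apply _ _
    rw [hstep, lid_domCoprod]
    rw [← Finset.sum_subset (Finset.subset_univ (Finset.univ.image fm)) hvanish]
    rw [Finset.sum_image (fun s _ t _ hst => hfm_inj hst)]
    rw [Finset.sum_congr rfl (fun t _ => hgood t)]
    rw [Finset.sum_const, Finset.card_univ, Fintype.card_fin]
    push_cast [Nat.factorial_succ]
    ring

lemma domCoprod_comp {a b : ℕ} (f : V [⋀^Fin a]→ₗ[ℝ] ℝ) (g : V [⋀^Fin b]→ₗ[ℝ] ℝ)
    (P : V →ₗ[ℝ] V) (x : Fin a ⊕ Fin b → V) :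
    ((f.compLinearMap P).domCoprod (g.compLinearMap P)) x
      = (f.domCoprod g) (fun z => P (x z)) := by
  rw [AlternatingMap.domCoprod_apply, AlternatingMap.domCoprod_apply,
    MultilinearMap.sum_apply, MultilinearMap.sum_apply]
  refine Finset.sum_congr rfl fun c _ => ?_
  induction c using Quotient.inductionOn' with
  | h σ =>
    rw [AlternatingMap.domCoprod.summand_mk'', AlternatingMap.domCoprod.summand_mk'']
    simp only [MultilinearMap.smul_apply, MultilinearMap.domDomCongr_apply,
      MultilinearMap.domCoprod_apply, AlternatingMap.coe_multilinearMap,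
      AlternatingMap.compLinearMap_apply]

lemma wedgeA_comp {a b : ℕ} (f : V [⋀^Fin a]→ₗ[ℝ] ℝ) (g : V [⋀^Fin b]→ₗ[ℝ] ℝ)
    (P : V →ₗ[ℝ] V) :
    wedgeA (f.compLinearMap P) (g.compLinearMap P) = (wedgeA f g).compLinearMap P := by
  ext y
  rw [AlternatingMap.compLinearMap_apply, wedgeA_apply, wedgeA_apply, domCoprod_comp]

lemma bpowA_comp (β : V [⋀^Fin 2]→ₗ[ℝ] ℝ) (P : V →ₗ[ℝ] V) :
    ∀ n, bpowA (β.compLinearMap P) n = (bpowA β n).compLinearMap P := by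
  intro n
  induction n with
  | zero =>
    ext y
    simp [bpowA, AlternatingMap.compLinearMap_apply]
  | succ n ihn =>
    have hcc : 2 + 2 * n = 2 * (n + 1) := by omega
    rw [show bpowA (β.compLinearMap P) (n + 1)
      = (wedgeA (β.compLinearMap P) (bpowA (β.compLinearMap P) n)).domDomCongr (finCongr hcc)
      from rfl]
    rw [ihn, wedgeA_comp]
    rw [show bpowA β (n + 1) = (wedgeA β (bpowA β n)).domDomCongr (finCongr hcc) from rfl]
    ext y
    rw [AlternatingMap.domDomCongr_apply, AlternatingMap.compLinearMap_apply,
      AlternatingMap.compLinearMap_apply, AlternatingMap.domDomCongr_apply]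
    rfl

/-- Let `α` be a nonzero alternating 1-form and `β` an alternating 2-form on `V`, with
`κ = ker α` and `h = {v ∈ κ : β(v,w) = 0 for all w ∈ κ}` the radical of `β|_κ`. Then `h`
has even codimension in `κ`; and if moreover `α ∧ β^k ≠ 0` and `α ∧ β^{k+1} = 0`, the
restriction of `β` to `κ` has rank exactly `2k`, i.e. `h` has codimension `2k` in `κ`. -/
theorem radical_even_codim_and_rank_two_k
    [FiniteDimensional ℝ V] (k : ℕ)
    (α : V [⋀^Fin 1]→ₗ[ℝ] ℝ) (β : V [⋀^Fin 2]→ₗ[ℝ] ℝ)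
    (L : Module.Dual ℝ V) (hL : ∀ v, L v = α ![v]) (hα : L ≠ 0)
    (B : LinearMap.BilinForm ℝ V) (hB : ∀ v w, B v w = β ![v, w])
    (κ : Submodule ℝ V) (hκ : κ = LinearMap.ker L)
    (h : Submodule ℝ V) (hh : h = κ ⊓ ⨅ w ∈ κ, LinearMap.ker (B.flip w)) :
    (∃ m : ℕ, finrank ℝ κ = finrank ℝ h + 2 * m) ∧
    (wedgeA α (bpowA β k) ≠ 0 → wedgeA α (bpowA β (k + 1)) = 0 →
      finrank ℝ κ = finrank ℝ h + 2 * k) := by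
  have halt : ∀ v, B v v = 0 := by
    intro v
    rw [hB]
    exact β.map_eq_zero_of_eq ![v, v] (i := 0) (j := 1) (by simp) (by norm_num)
  have hskew := skewB B halt
  obtain ⟨m, p, hp1, hp2, hpm, hdim⟩ := exists_matched B halt κ
  have hrad_eq : h = radB B κ := by rw [hh]; rfl
  have hhh : finrank ℝ h = finrank ℝ (radB B κ) := by rw [hrad_eq]
  refine ⟨⟨m, by rw [hrad_eq]; exact hdim⟩, ?_⟩
  intro hne hzero
  obtain ⟨v1, hv1⟩ : ∃ v, L v ≠ 0 := by
    by_contra hcon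
    push_neg at hcon
    exact hα (by ext v; simp [hcon v])
  set v0 : V := (L v1)⁻¹ • v1 with hv0def
  have hLv0 : L v0 = 1 := by rw [hv0def, map_smul, smul_eq_mul, inv_mul_cancel₀ hv1]
  have hκL : ∀ v, v ∈ κ ↔ L v = 0 := by intro v; rw [hκ]; exact LinearMap.mem_ker
  have hα1 : ∀ y : Fin 1 → V, α y = L (y 0) := by
    intro y
    calc α y = α ![y 0] := congrArg α (vec_one y)
      _ = L (y 0) := (hL _).symm
  have hβ2 : ∀ y : Fin 2 → V, β y = B (y 0) (y 1) := by
    intro y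
    calc β y = β ![y 0, y 1] := congrArg β (vec_two y)
      _ = B (y 0) (y 1) := (hB _ _).symm
  have hLsurj : Function.Surjective L := by
    intro c
    exact ⟨c • v0, by rw [map_smul, hLv0, smul_eq_mul, mul_one]⟩
  have hrankV : finrank ℝ V = finrank ℝ κ + 1 := by
    have hrn := LinearMap.finrank_range_add_finrank_ker L
    rw [LinearMap.range_eq_top.mpr hLsurj, finrank_top, finrank_self] at hrn
    rw [hκ]
    omega
  -- h' := vectors killing everything
  set h' : Submodule ℝ V := h ⊓ LinearMap.ker (B.flip v0) with hh'
  have hmemh : ∀ z ∈ h, z ∈ κ ∧ ∀ w ∈ κ, B z w = 0 := by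
    intro z hz
    rw [hrad_eq] at hz
    exact mem_radB.mp hz
  have hzglobal : ∀ z ∈ h', ∀ w, B z w = 0 := by
    intro z hz w
    obtain ⟨hz1, hz2⟩ := Submodule.mem_inf.mp hz
    have hz2' : B z v0 = 0 := LinearMap.mem_ker.mp hz2
    have hdecomp : w - (L w) • v0 ∈ κ := by
      rw [hκL, map_sub, map_smul, hLv0, smul_eq_mul, mul_one, sub_self]
    have he : B z w = B z (w - (L w) • v0) + (L w) * B z v0 := by
      simp only [map_sub, map_smul, smul_eq_mul]
      ring
    rw [he, (hmemh z hz1).2 _ hdecomp, hz2', mul_zero, add_zero]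
  have hh'h : h' ≤ h := inf_le_left
  have hh'κ : h' ≤ κ := fun z hz => (hmemh z (hh'h hz)).1
  have hh'dim : finrank ℝ h ≤ finrank ℝ h' + 1 := by
    set f : V →ₗ[ℝ] ℝ := B.flip v0 with hf
    have hker : LinearMap.ker (f.domRestrict h) = Submodule.comap h.subtype h' := by
      ext ⟨z, hz⟩
      simp only [LinearMap.mem_ker, LinearMap.domRestrict_apply, Submodule.mem_comap,
        Submodule.coe_subtype, hh', Submodule.mem_inf, LinearMap.mem_ker, hf]
      tauto
    have hrn := LinearMap.finrank_range_add_finrank_ker (f.domRestrict h)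
    have hr1 : finrank ℝ (LinearMap.range (f.domRestrict h)) ≤ 1 := by
      have h2 : finrank ℝ (LinearMap.range (f.domRestrict h)) ≤ finrank ℝ ℝ :=
        Submodule.finrank_le _
      simpa using h2
    have hk2 : finrank ℝ (LinearMap.ker (f.domRestrict h)) = finrank ℝ h' := by
      rw [hker]
      exact LinearEquiv.finrank_eq (Submodule.comapSubtypeEquivOfLe hh'h)
    omega
  -- vanishing of long wedges
  have hvanish : ∀ k' : ℕ, m < k' → wedgeA α (bpowA β k') = 0 := by
    intro k' hk'
    obtain ⟨C, hC⟩ := Submodule.exists_isCompl h'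
    set pr : V →ₗ[ℝ] V := C.subtype.comp (C.linearProjOfIsCompl h' hC.symm) with hpr
    have hsub : ∀ v : V, v - pr v ∈ h' := by
      intro v
      have hself := Submodule.projection_add_projection_eq_self hC v
      have : v - pr v = (h'.linearProjOfIsCompl C hC v : V) := by
        rw [hpr]
        simp only [LinearMap.comp_apply, Submodule.coe_subtype]
        rw [sub_eq_iff_eq_add]
        exact hself.symm
      rw [this]
      exact (h'.linearProjOfIsCompl C hC v).2
    have hLP : ∀ v, L (pr v) = L v := by
      intro v
      have hmem : v - pr v ∈ κ := hh'κ (hsub v)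
      have hz : L (v - pr v) = 0 := (hκL _).mp hmem
      rw [map_sub] at hz
      linarith
    have hBP : ∀ v w, B (pr v) (pr w) = B v w := by
      intro v w
      have hvw : B (pr v) (w - pr w) = 0 := by
        rw [hskew, hzglobal _ (hsub w)]
        ring
      conv_rhs => rw [show v = pr v + (v - pr v) by abel, show w = pr w + (w - pr w) by abel]
      simp only [map_add, LinearMap.add_apply]
      rw [hzglobal _ (hsub v) (pr w), hzglobal _ (hsub v) (w - pr w), hvw]
      ring
    have hαP : α.compLinearMap pr = α := by
      ext y
      rw [AlternatingMap.compLinearMap_apply, hα1, hα1]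
      exact hLP (y 0)
    have hβP : β.compLinearMap pr = β := by
      ext y
      rw [AlternatingMap.compLinearMap_apply, hβ2, hβ2]
      exact hBP (y 0) (y 1)
    have hrange : ∀ v, pr v ∈ C := by
      intro v
      rw [hpr]
      exact (C.linearProjOfIsCompl h' hC.symm v).2
    have hCdim : finrank ℝ h' + finrank ℝ C = finrank ℝ V :=
      Submodule.finrank_add_eq_of_isCompl hC
    ext y
    rw [AlternatingMap.zero_apply]
    have hrw : wedgeA α (bpowA β k') y = wedgeA α (bpowA β k') (fun i => pr (y i)) := by
      conv_lhs => rw [← hαP, ← hβP, bpowA_comp, wedgeA_comp]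
      rw [AlternatingMap.compLinearMap_apply]
    rw [hrw]
    apply AlternatingMap.map_linearDependent
    intro hLI
    have hspan : Submodule.span ℝ (Set.range fun i => pr (y i)) ≤ C := by
      rw [Submodule.span_le]
      rintro _ ⟨i, rfl⟩
      exact hrange (y i)
    have hcard := finrank_span_eq_card hLI
    have hle : finrank ℝ (Submodule.span ℝ (Set.range fun i => pr (y i))) ≤ finrank ℝ C :=
      Submodule.finrank_mono hspan
    rw [hcard, Fintype.card_fin] at hle
    omega
  have hkm : k ≤ m := by
    by_contra hcon
    push_neg at hcon
    exact hne (hvanish k hcon)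
  have hmk : m ≤ k := by
    by_contra hcon
    push_neg at hcon
    set q : Fin (k + 1) → V × V := fun i => p (Fin.castLE hcon i) with hq
    have hqm : MatchedB B q := by
      refine ⟨fun i => hpm.one _, ?_, ?_, ?_, ?_⟩ <;>
        · intro i j hij
          simp only [hq]
          first
          | exact hpm.z11 _ _ (fun hcc => hij (Fin.castLE_injective _ hcc))
          | exact hpm.z12 _ _ (fun hcc => hij (Fin.castLE_injective _ hcc))
          | exact hpm.z21 _ _ (fun hcc => hij (Fin.castLE_injective _ hcc))
          | exact hpm.z22 _ _ (fun hcc => hij (Fin.castLE_injective _ hcc))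
    have hFLκ : ∀ j, FL q j ∈ κ := by
      intro j
      simp only [FL, hq]
      split_ifs
      · exact hp1 _
      · exact hp2 _
    set y : Fin (1 + 2 * (k + 1)) → V :=
      fun j => Sum.elim (fun _ : Fin 1 => v0) (FL q) (finSumFinEquiv.symm j) with hy
    have hval : wedgeA α (bpowA β (k + 1)) y = ((k + 1).factorial : ℝ) := by
      rw [wedgeA_apply]
      have hxy : (fun z => y (finSumFinEquiv z)) = Sum.elim (fun _ : Fin 1 => v0) (FL q) := by
        funext z
        simp only [hy, Equiv.symm_apply_apply]
      rw [hxy]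
      rw [lid_domCoprod_one_left]
      · have hfa : (α fun _ : Fin 1 =>
            Sum.elim (fun _ : Fin 1 => v0) (FL q) (Sum.inl 0)) = 1 := by
          rw [hα1]
          exact hLv0
        have hgb : (fun i : Fin (2 * (k + 1)) =>
            Sum.elim (fun _ : Fin 1 => v0) (FL q) (Sum.inr i)) = FL q := rfl
        rw [hfa, hgb, one_mul]
        exact bpowA_FL B β hB halt (k + 1) q hqm
      · intro i
        rw [hα1]
        exact (hκL _).mp (hFLκ i)
    rw [hzero, AlternatingMap.zero_apply] at hval
    have : ((k + 1).factorial : ℝ) ≠ 0 := by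
      exact_mod_cast Nat.factorial_ne_zero (k + 1)
    exact this hval.symm
  have hmkk : m = k := le_antisymm hmk hkm
  rw [hrad_eq, hdim, hmkk]


end
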